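/- Every door gadget can simulate some fully directed door: given any door that can simulate a diode (which holds for every mixed and every undirected door), wiring each tunnel of the door through a diode at each end (all diodes on a tunnel pointing the same way) yields a system whose external behavior realizes exactly the transitive closure of the directed door obtained by directing each tunnel of the original door. -/

import Mathlib

/-- A 1-player gadget: a finite set of states, a finite set of locations,
and a set of traversals between state–location pairs. -/
structure Gadget where
  State : Type
  Loc : Type
  stateFin : Fintype State
  locFin : Fintype Loc
  trav : (State × Loc) → (State × Loc) → Prop

open Classical in
/-- Update the state of one gadget instance in a global state. -/
noncomputable def updState {ι St : Type} (σg : ι → St) (i : ι) (s : St) : ι → St :=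
  fun j => if j = i then s else σg j

/-- A system of copies of the gadget `G`: a finite collection of instances together with
symmetric connections (pairings of locations) along which the agent moves freely. -/
structure System (G : Gadget) where
  ι : Type
  instFin : Fintype ι
  conn : (ι × G.Loc) → (ι × G.Loc) → Prop
  conn_symm : ∀ x y, conn x y → conn y x

/-- A single move of the agent in a system: a traversal inside one instance
(changing only that instance's state), or a free move along a connection. -/
inductive SysStep (G : Gadget) (S : System G) :
    ((S.ι → G.State) × (S.ι × G.Loc)) → ((S.ι → G.State) × (S.ι × G.Loc)) → Prop
  | trav {σg : S.ι → G.State} {i : S.ι} {a b : G.Loc} {s' : G.State} :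
      G.trav (σg i, a) (s', b) →
      SysStep G S (σg, (i, a)) (updState σg i s', (i, b))
  | move {σg : S.ι → G.State} {x y : S.ι × G.Loc} :
      S.conn x y → SysStep G S (σg, x) (σg, y)

/-- `Simulates G' G` : there is a system of copies of `G'`, with external locations
identified (injectively) with the locations of `G` and an injective encoding of the
states of `G` as global states, whose reachability behavior between external locations
in encoded global states is exactly the transitive closure of `G`. -/
def Simulates (G' G : Gadget) : Prop :=
  ∃ S : System G', ∃ ext : G.Loc → S.ι × G'.Loc, ∃ enc : G.State → (S.ι → G'.State),
    Function.Injective ext ∧ Function.Injective enc ∧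
    ∀ s s' a b,
      Relation.ReflTransGen (SysStep G' S) (enc s, ext a) (enc s', ext b) ↔
      Relation.ReflTransGen G.trav (s, a) (s', b)

/-! ### Doors.  State `true` = open, `false` = closed.
A direction flag `true` means the corresponding tunnel is directed,
`false` that it is undirected. -/

/-- Locations of a door with an opening tunnel: entrance/exit of the opening (`O`),
traverse (`T`) and closing (`C`) tunnels. -/
inductive DoorLoc | O0 | O1 | T0 | T1 | C0 | C1
deriving DecidableEq

instance instFintypeDoorLoc : Fintype DoorLoc :=
  Fintype.ofList [DoorLoc.O0, DoorLoc.O1, DoorLoc.T0, DoorLoc.T1, DoorLoc.C0, DoorLoc.C1] (by intro x; cases x <;> decide)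

/-- Traversals of a door with an opening tunnel; `dO`, `dT`, `dC` record whether the
opening, traverse, closing tunnels are directed. -/
def doorTrav (dO dT dC : Bool) : (Bool × DoorLoc) → (Bool × DoorLoc) → Prop := fun x y =>
  (x.2 = DoorLoc.O0 ∧ y = (true, DoorLoc.O1)) ∨
  (dO = false ∧ x.2 = DoorLoc.O1 ∧ y = (true, DoorLoc.O0)) ∨
  (x.1 = true ∧ x.2 = DoorLoc.T0 ∧ y = (true, DoorLoc.T1)) ∨
  (dT = false ∧ x.1 = true ∧ x.2 = DoorLoc.T1 ∧ y = (true, DoorLoc.T0)) ∨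
  (x.2 = DoorLoc.C0 ∧ y = (false, DoorLoc.C1)) ∨
  (dC = false ∧ x.2 = DoorLoc.C1 ∧ y = (false, DoorLoc.C0))

/-- The door with an opening tunnel (an open-required door). -/
def doorGadget (dO dT dC : Bool) : Gadget :=
  ⟨Bool, DoorLoc, inferInstance, inferInstance, doorTrav dO dT dC⟩

/-- Locations of an open-optional door: opening port `O` plus traverse and closing tunnels. -/
inductive ODoorLoc | O | T0 | T1 | C0 | C1
deriving DecidableEq

instance instFintypeODoorLoc : Fintype ODoorLoc :=
  Fintype.ofList [ODoorLoc.O, ODoorLoc.T0, ODoorLoc.T1, ODoorLoc.C0, ODoorLoc.C1] (by intro x; cases x <;> decide)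

/-- Traversals of an open-optional door: a visit to the opening port `O` sets the state
to open; `dT`, `dC` record whether the traverse and closing tunnels are directed. -/
def openOptDoorTrav (dT dC : Bool) : (Bool × ODoorLoc) → (Bool × ODoorLoc) → Prop := fun x y =>
  (x.2 = ODoorLoc.O ∧ y = (true, ODoorLoc.O)) ∨
  (x.1 = true ∧ x.2 = ODoorLoc.T0 ∧ y = (true, ODoorLoc.T1)) ∨
  (dT = false ∧ x.1 = true ∧ x.2 = ODoorLoc.T1 ∧ y = (true, ODoorLoc.T0)) ∨
  (x.2 = ODoorLoc.C0 ∧ y = (false, ODoorLoc.C1)) ∨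
  (dC = false ∧ x.2 = ODoorLoc.C1 ∧ y = (false, ODoorLoc.C0))

/-- The open-optional door. -/
def openOptDoorGadget (dT dC : Bool) : Gadget :=
  ⟨Bool, ODoorLoc, inferInstance, inferInstance, openOptDoorTrav dT dC⟩

/-- A diode: a 1-state gadget with one always-traversable directed tunnel. -/
inductive DiodeLoc | inp | out
deriving DecidableEq

instance instFintypeDiodeLoc : Fintype DiodeLoc :=
  Fintype.ofList [DiodeLoc.inp, DiodeLoc.out] (by intro x; cases x <;> decide)

def diode : Gadget :=
  ⟨Unit, DiodeLoc, inferInstance, inferInstance,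
    fun x y => x.2 = DiodeLoc.inp ∧ y.2 = DiodeLoc.out⟩

/-- Locations of an open-required normal self-closing door. -/
inductive SCDLoc | O0 | O1 | T0 | T1
deriving DecidableEq

instance instFintypeSCDLoc : Fintype SCDLoc :=
  Fintype.ofList [SCDLoc.O0, SCDLoc.O1, SCDLoc.T0, SCDLoc.T1] (by intro x; cases x <;> decide)

/-- Open-required normal self-closing door: opening tunnel `O` (always traversable, sets
the state to open), self-closing tunnel `T` (traversable exactly when open, sets closed). -/
def nSCDTrav (dO dT : Bool) : (Bool × SCDLoc) → (Bool × SCDLoc) → Prop := fun x y =>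
  (x.2 = SCDLoc.O0 ∧ y = (true, SCDLoc.O1)) ∨
  (dO = false ∧ x.2 = SCDLoc.O1 ∧ y = (true, SCDLoc.O0)) ∨
  (x.1 = true ∧ x.2 = SCDLoc.T0 ∧ y = (false, SCDLoc.T1)) ∨
  (dT = false ∧ x.1 = true ∧ x.2 = SCDLoc.T1 ∧ y = (false, SCDLoc.T0))

def nSCD (dO dT : Bool) : Gadget :=
  ⟨Bool, SCDLoc, inferInstance, inferInstance, nSCDTrav dO dT⟩

/-- Locations of an open-optional normal self-closing door. -/
inductive OOSCDLoc | O | T0 | T1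
deriving DecidableEq

instance instFintypeOOSCDLoc : Fintype OOSCDLoc :=
  Fintype.ofList [OOSCDLoc.O, OOSCDLoc.T0, OOSCDLoc.T1] (by intro x; cases x <;> decide)

/-- Open-optional normal self-closing door: opening port `O` (visit sets the state to
open), self-closing tunnel `T` (traversable exactly when open, sets the state closed). -/
def ooSCDTrav (dT : Bool) : (Bool × OOSCDLoc) → (Bool × OOSCDLoc) → Prop := fun x y =>
  (x.2 = OOSCDLoc.O ∧ y = (true, OOSCDLoc.O)) ∨
  (x.1 = true ∧ x.2 = OOSCDLoc.T0 ∧ y = (false, OOSCDLoc.T1)) ∨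
  (dT = false ∧ x.1 = true ∧ x.2 = OOSCDLoc.T1 ∧ y = (false, OOSCDLoc.T0))

def ooSCD (dT : Bool) : Gadget :=
  ⟨Bool, OOSCDLoc, inferInstance, inferInstance, ooSCDTrav dT⟩

/-- Locations of a symmetric self-closing door. -/
inductive SymSCDLoc | A0 | A1 | B0 | B1
deriving DecidableEq

instance instFintypeSymSCDLoc : Fintype SymSCDLoc :=
  Fintype.ofList [SymSCDLoc.A0, SymSCDLoc.A1, SymSCDLoc.B0, SymSCDLoc.B1] (by intro x; cases x <;> decide)

/-- Symmetric self-closing door: self-opening tunnel `A` (traversable exactly when closed,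
sets the state open), self-closing tunnel `B` (traversable exactly when open, sets closed). -/
def symSCDTrav (dA dB : Bool) : (Bool × SymSCDLoc) → (Bool × SymSCDLoc) → Prop := fun x y =>
  (x.1 = false ∧ x.2 = SymSCDLoc.A0 ∧ y = (true, SymSCDLoc.A1)) ∨
  (dA = false ∧ x.1 = false ∧ x.2 = SymSCDLoc.A1 ∧ y = (true, SymSCDLoc.A0)) ∨
  (x.1 = true ∧ x.2 = SymSCDLoc.B0 ∧ y = (false, SymSCDLoc.B1)) ∨
  (dB = false ∧ x.1 = true ∧ x.2 = SymSCDLoc.B1 ∧ y = (false, SymSCDLoc.B0))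

def symSCD (dA dB : Bool) : Gadget :=
  ⟨Bool, SymSCDLoc, inferInstance, inferInstance, symSCDTrav dA dB⟩

/-! ### Auxiliary development for the proof -/

section DoorSim

open DoorLoc Relation

abbrev Idx := Fin 7
abbrev Conf := (Idx → Bool) × (Idx × DoorLoc)

/-- Connections of the simulating system: the central door is copy `0`; copies `1`–`6`
are single-door "diodes" (wiring `O1–T0`, `T1–C0` inside each copy, entering at `O0`
and exiting at `C1`) guarding the six ports of the central door. -/
def connPairs : List ((Idx × DoorLoc) × (Idx × DoorLoc)) :=
  [((1,O1),(1,T0)), ((1,T1),(1,C0)),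
   ((2,O1),(2,T0)), ((2,T1),(2,C0)),
   ((3,O1),(3,T0)), ((3,T1),(3,C0)),
   ((4,O1),(4,T0)), ((4,T1),(4,C0)),
   ((5,O1),(5,T0)), ((5,T1),(5,C0)),
   ((6,O1),(6,T0)), ((6,T1),(6,C0)),
   ((1,C1),(0,O0)), ((0,O1),(2,O0)),
   ((3,C1),(0,T0)), ((0,T1),(4,O0)),
   ((5,C1),(0,C0)), ((0,C1),(6,O0))]

abbrev myConn (x y : Idx × DoorLoc) : Prop := (x, y) ∈ connPairs ∨ (y, x) ∈ connPairs

abbrev mySys (dO dT dC : Bool) : System (doorGadget dO dT dC) :=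
  ⟨Idx, inferInstance, myConn, fun _ _ h => h.symm⟩

def myExt : DoorLoc → Idx × DoorLoc
  | O0 => (1,O0) | O1 => (2,C1) | T0 => (3,O0) | T1 => (4,C1) | C0 => (5,O0) | C1 => (6,C1)

def myEnc (s : Bool) : Idx → Bool := fun i => if i = 0 then s else false

def connTargets (p : Idx × DoorLoc) : List (Idx × DoorLoc) :=
  connPairs.filterMap fun q =>
    if q.1 = p then some q.2 else if q.2 = p then some q.1 else none

/-- A computable over-approximation of single steps (all tunnels treated as undirected). -/
def succ (c : Conf) : List Conf :=
  (match c.2.2 with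
   | O0 => [(Function.update c.1 c.2.1 true, (c.2.1, O1))]
   | O1 => [(Function.update c.1 c.2.1 true, (c.2.1, O0))]
   | T0 => if c.1 c.2.1 then [(Function.update c.1 c.2.1 true, (c.2.1, T1))] else []
   | T1 => if c.1 c.2.1 then [(Function.update c.1 c.2.1 true, (c.2.1, T0))] else []
   | C0 => [(Function.update c.1 c.2.1 false, (c.2.1, C1))]
   | C1 => [(Function.update c.1 c.2.1 false, (c.2.1, C0))])
  ++ (connTargets c.2).map fun y => (c.1, y)

lemma updState_eq {ι St : Type} [DecidableEq ι] (σ : ι → St) (i : ι) (s : St) :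
    updState σ i s = Function.update σ i s := by
  funext j
  by_cases h : j = i
  · subst h; simp [updState]
  · simp [updState, h, Function.update_of_ne h]

lemma connTargets_complete : ∀ p q : Idx × DoorLoc, myConn p q → q ∈ connTargets p := by
  decide

lemma step_succ {dO dT dC : Bool} {x y : Conf}
    (h : SysStep (doorGadget dO dT dC) (mySys dO dT dC) x y) : y ∈ succ x := by
  revert x y
  show ∀ {x y : ((mySys dO dT dC).ι → (doorGadget dO dT dC).State) ×
      ((mySys dO dT dC).ι × (doorGadget dO dT dC).Loc)},
    SysStep (doorGadget dO dT dC) (mySys dO dT dC) x y → y ∈ succ x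
  intro x y h
  cases h with
  | move h =>
    rename_i σg x2 y2
    exact List.mem_append_right _ (List.mem_map.mpr ⟨y2, connTargets_complete _ _ h, rfl⟩)
  | trav h =>
    rename_i σg i a b s'
    rcases h with ⟨ha, hy⟩ | ⟨_, ha, hy⟩ | ⟨hs, ha, hy⟩ | ⟨_, hs, ha, hy⟩ | ⟨ha, hy⟩ | ⟨_, ha, hy⟩ <;>
      (simp only at ha; subst ha) <;>
      (injection hy with h1 h2; subst h1; subst h2) <;>
      erw [updState_eq] <;>
      refine List.mem_append_left _ ?_ <;>
      simp only [succ] <;>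
      first
        | exact List.mem_singleton.mpr rfl
        | (erw [if_pos (show σg i = true from hs)]; exact List.mem_singleton.mpr rfl)

abbrev Key := (Bool × Bool × Bool × Bool × Bool × Bool × Bool) × (Idx × DoorLoc)

def keySt (σ : Idx → Bool) : Bool × Bool × Bool × Bool × Bool × Bool × Bool :=
  (σ 0, σ 1, σ 2, σ 3, σ 4, σ 5, σ 6)

def stOf (k : Bool × Bool × Bool × Bool × Bool × Bool × Bool) : Idx → Bool := fun j =>
  match j with
  | 0 => k.1 | 1 => k.2.1 | 2 => k.2.2.1 | 3 => k.2.2.2.1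
  | 4 => k.2.2.2.2.1 | 5 => k.2.2.2.2.2.1 | 6 => k.2.2.2.2.2.2

def key (c : Conf) : Key := (keySt c.1, c.2)

def succK (k : Key) : List Key := (succ (stOf k.1, k.2)).map key

lemma stOf_keySt (σ : Idx → Bool) (i : Idx) : stOf (keySt σ) i = σ i := by
  fin_cases i <;> rfl

lemma keySt_update (σ : Idx → Bool) (i : Idx) (b : Bool) :
    keySt (Function.update σ i b) = keySt (Function.update (stOf (keySt σ)) i b) := by
  fin_cases i <;> rfl

lemma key_succ {x y : Conf} (h : y ∈ succ x) : key y ∈ succK (key x) := by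
  obtain ⟨σ, i, l⟩ := x
  have hst : stOf (keySt σ) i = σ i := stOf_keySt σ i
  show key y ∈ (succ (stOf (keySt σ), (i, l))).map key
  rcases List.mem_append.mp h with h1 | h1
  case inr =>
    rcases List.mem_map.mp h1 with ⟨z, hz, rfl⟩
    exact List.mem_map.mpr ⟨(stOf (keySt σ), z),
      List.mem_append_right _ (List.mem_map.mpr ⟨z, hz, rfl⟩), rfl⟩
  case inl =>
    cases l with
    | O0 =>
      obtain rfl := List.mem_singleton.mp h1
      exact List.mem_map.mpr ⟨(Function.update (stOf (keySt σ)) i true, (i, O1)),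
        List.mem_append_left _ (List.mem_singleton.mpr rfl),
        congrArg (fun t => (t, (i, O1))) (keySt_update σ i true).symm⟩
    | O1 =>
      obtain rfl := List.mem_singleton.mp h1
      exact List.mem_map.mpr ⟨(Function.update (stOf (keySt σ)) i true, (i, O0)),
        List.mem_append_left _ (List.mem_singleton.mpr rfl),
        congrArg (fun t => (t, (i, O0))) (keySt_update σ i true).symm⟩
    | T0 =>
      have h1' : y ∈ (if σ i = true then [(Function.update σ i true, (i, T1))] else []) := h1
      cases hσ : σ i with
      | false => rw [hσ] at h1'; simp at h1'
      | true =>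
        rw [hσ] at h1'
        obtain rfl := List.mem_singleton.mp h1' 
        refine List.mem_map.mpr ⟨(Function.update (stOf (keySt σ)) i true, (i, T1)),
          List.mem_append_left _ ?_,
          congrArg (fun t => (t, (i, T1))) (keySt_update σ i true).symm⟩
        simp [hst, hσ]
    | T1 =>
      have h1' : y ∈ (if σ i = true then [(Function.update σ i true, (i, T0))] else []) := h1
      cases hσ : σ i with
      | false => rw [hσ] at h1'; simp at h1'
      | true =>
        rw [hσ] at h1'
        obtain rfl := List.mem_singleton.mp h1' 
        refine List.mem_map.mpr ⟨(Function.update (stOf (keySt σ)) i true, (i, T0)),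
          List.mem_append_left _ ?_,
          congrArg (fun t => (t, (i, T0))) (keySt_update σ i true).symm⟩
        simp [hst, hσ]
    | C0 =>
      obtain rfl := List.mem_singleton.mp h1
      exact List.mem_map.mpr ⟨(Function.update (stOf (keySt σ)) i false, (i, C1)),
        List.mem_append_left _ (List.mem_singleton.mpr rfl),
        congrArg (fun t => (t, (i, C1))) (keySt_update σ i false).symm⟩
    | C1 =>
      obtain rfl := List.mem_singleton.mp h1
      exact List.mem_map.mpr ⟨(Function.update (stOf (keySt σ)) i false, (i, C0)),
        List.mem_append_left _ (List.mem_singleton.mpr rfl),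
        congrArg (fun t => (t, (i, C0))) (keySt_update σ i false).symm⟩

/-- For each start `(s, a)`, the (keys of the) exact set of configurations reachable from
`(myEnc s, myExt a)`, computed by BFS for the undirected over-approximation. -/
def VLK : Bool → DoorLoc → List Key
  | false, DoorLoc.O0 => [
    ((true, false, false, false, false, false, false), (2, DoorLoc.T1)),
    ((true, false, false, false, false, false, false), (2, DoorLoc.C0)),
    ((true, false, false, false, false, false, false), (2, DoorLoc.C1)),
    ((true, false, true, false, false, false, false), (2, DoorLoc.C0)),
    ((true, false, true, false, false, false, false), (2, DoorLoc.T1)),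
    ((true, false, true, false, false, false, false), (2, DoorLoc.T0)),
    ((true, false, true, false, false, false, false), (1, DoorLoc.T1)),
    ((true, false, true, false, false, false, false), (1, DoorLoc.C0)),
    ((true, false, true, false, false, false, false), (1, DoorLoc.C1)),
    ((true, false, true, false, false, false, false), (0, DoorLoc.O0)),
    ((true, false, true, false, false, false, false), (0, DoorLoc.O1)),
    ((true, false, true, false, false, false, false), (2, DoorLoc.O0)),
    ((true, false, true, false, false, false, false), (2, DoorLoc.O1)),
    ((true, false, false, false, false, false, false), (2, DoorLoc.O0)),
    ((true, false, false, false, false, false, false), (1, DoorLoc.T1)),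
    ((true, false, false, false, false, false, false), (1, DoorLoc.C0)),
    ((true, false, false, false, false, false, false), (1, DoorLoc.C1)),
    ((true, false, false, false, false, false, false), (0, DoorLoc.O0)),
    ((true, false, false, false, false, false, false), (0, DoorLoc.O1)),
    ((false, false, false, false, false, false, false), (0, DoorLoc.O0)),
    ((false, false, false, false, false, false, false), (1, DoorLoc.T1)),
    ((false, false, false, false, false, false, false), (1, DoorLoc.C0)),
    ((false, false, false, false, false, false, false), (1, DoorLoc.C1)),
    ((false, true, false, false, false, false, false), (1, DoorLoc.C0)),
    ((false, true, false, false, false, false, false), (1, DoorLoc.T1)),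
    ((false, true, false, false, false, false, false), (1, DoorLoc.T0)),
    ((false, true, false, false, false, false, false), (1, DoorLoc.O0)),
    ((false, true, false, false, false, false, false), (1, DoorLoc.O1)),
    ((false, false, false, false, false, false, false), (1, DoorLoc.O0))]
  | true, DoorLoc.O0 => [
    ((true, false, false, false, false, false, false), (2, DoorLoc.T1)),
    ((true, false, false, false, false, false, false), (2, DoorLoc.C0)),
    ((true, false, false, false, false, false, false), (2, DoorLoc.C1)),
    ((true, false, true, false, false, false, false), (2, DoorLoc.C0)),
    ((true, false, true, false, false, false, false), (2, DoorLoc.T1)),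
    ((true, false, true, false, false, false, false), (2, DoorLoc.T0)),
    ((true, false, true, false, false, false, false), (1, DoorLoc.T1)),
    ((true, false, true, false, false, false, false), (1, DoorLoc.C0)),
    ((true, false, true, false, false, false, false), (1, DoorLoc.C1)),
    ((true, false, true, false, false, false, false), (0, DoorLoc.O0)),
    ((true, false, true, false, false, false, false), (0, DoorLoc.O1)),
    ((true, false, true, false, false, false, false), (2, DoorLoc.O0)),
    ((true, false, true, false, false, false, false), (2, DoorLoc.O1)),
    ((true, false, false, false, false, false, false), (2, DoorLoc.O0)),
    ((true, false, false, false, false, false, false), (0, DoorLoc.O1)),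
    ((true, false, false, false, false, false, false), (0, DoorLoc.O0)),
    ((true, false, false, false, false, false, false), (1, DoorLoc.T1)),
    ((true, false, false, false, false, false, false), (1, DoorLoc.C0)),
    ((true, false, false, false, false, false, false), (1, DoorLoc.C1)),
    ((true, true, false, false, false, false, false), (1, DoorLoc.C0)),
    ((true, true, false, false, false, false, false), (1, DoorLoc.T1)),
    ((true, true, false, false, false, false, false), (1, DoorLoc.T0)),
    ((true, true, false, false, false, false, false), (1, DoorLoc.O0)),
    ((true, true, false, false, false, false, false), (1, DoorLoc.O1)),
    ((true, false, false, false, false, false, false), (1, DoorLoc.O0))]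
  | false, DoorLoc.O1 => [
    ((false, false, false, false, false, false, false), (2, DoorLoc.T1)),
    ((false, false, false, false, false, false, false), (2, DoorLoc.C0)),
    ((false, false, false, false, false, false, false), (2, DoorLoc.C1))]
  | true, DoorLoc.O1 => [
    ((true, false, false, false, false, false, false), (2, DoorLoc.T1)),
    ((true, false, false, false, false, false, false), (2, DoorLoc.C0)),
    ((true, false, false, false, false, false, false), (2, DoorLoc.C1))]
  | false, DoorLoc.T0 => [
    ((false, false, false, false, false, false, false), (0, DoorLoc.T0)),
    ((false, false, false, false, false, false, false), (3, DoorLoc.T1)),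
    ((false, false, false, false, false, false, false), (3, DoorLoc.C0)),
    ((false, false, false, false, false, false, false), (3, DoorLoc.C1)),
    ((false, false, false, true, false, false, false), (3, DoorLoc.C0)),
    ((false, false, false, true, false, false, false), (3, DoorLoc.T1)),
    ((false, false, false, true, false, false, false), (3, DoorLoc.T0)),
    ((false, false, false, true, false, false, false), (3, DoorLoc.O0)),
    ((false, false, false, true, false, false, false), (3, DoorLoc.O1)),
    ((false, false, false, false, false, false, false), (3, DoorLoc.O0))]
  | true, DoorLoc.T0 => [
    ((true, false, false, false, false, false, false), (4, DoorLoc.T1)),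
    ((true, false, false, false, false, false, false), (4, DoorLoc.C0)),
    ((true, false, false, false, false, false, false), (4, DoorLoc.C1)),
    ((true, false, false, false, true, false, false), (4, DoorLoc.C0)),
    ((true, false, false, false, true, false, false), (4, DoorLoc.T1)),
    ((true, false, false, false, true, false, false), (4, DoorLoc.T0)),
    ((true, false, false, false, true, false, false), (3, DoorLoc.T1)),
    ((true, false, false, false, true, false, false), (3, DoorLoc.C0)),
    ((true, false, false, false, true, false, false), (3, DoorLoc.C1)),
    ((true, false, false, false, true, false, false), (0, DoorLoc.T0)),
    ((true, false, false, false, true, false, false), (0, DoorLoc.T1)),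
    ((true, false, false, false, true, false, false), (4, DoorLoc.O0)),
    ((true, false, false, false, true, false, false), (4, DoorLoc.O1)),
    ((true, false, false, false, false, false, false), (4, DoorLoc.O0)),
    ((true, false, false, false, false, false, false), (0, DoorLoc.T1)),
    ((true, false, false, false, false, false, false), (0, DoorLoc.T0)),
    ((true, false, false, false, false, false, false), (3, DoorLoc.T1)),
    ((true, false, false, false, false, false, false), (3, DoorLoc.C0)),
    ((true, false, false, false, false, false, false), (3, DoorLoc.C1)),
    ((true, false, false, true, false, false, false), (3, DoorLoc.C0)),
    ((true, false, false, true, false, false, false), (3, DoorLoc.T1)),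
    ((true, false, false, true, false, false, false), (3, DoorLoc.T0)),
    ((true, false, false, true, false, false, false), (3, DoorLoc.O0)),
    ((true, false, false, true, false, false, false), (3, DoorLoc.O1)),
    ((true, false, false, false, false, false, false), (3, DoorLoc.O0))]
  | false, DoorLoc.T1 => [
    ((false, false, false, false, false, false, false), (4, DoorLoc.T1)),
    ((false, false, false, false, false, false, false), (4, DoorLoc.C0)),
    ((false, false, false, false, false, false, false), (4, DoorLoc.C1))]
  | true, DoorLoc.T1 => [
    ((true, false, false, false, false, false, false), (4, DoorLoc.T1)),
    ((true, false, false, false, false, false, false), (4, DoorLoc.C0)),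
    ((true, false, false, false, false, false, false), (4, DoorLoc.C1))]
  | false, DoorLoc.C0 => [
    ((false, false, false, false, false, false, false), (6, DoorLoc.T1)),
    ((false, false, false, false, false, false, false), (6, DoorLoc.C0)),
    ((false, false, false, false, false, false, false), (6, DoorLoc.C1)),
    ((false, false, false, false, false, false, true), (6, DoorLoc.C0)),
    ((false, false, false, false, false, false, true), (6, DoorLoc.T1)),
    ((false, false, false, false, false, false, true), (6, DoorLoc.T0)),
    ((false, false, false, false, false, false, true), (5, DoorLoc.T1)),
    ((false, false, false, false, false, false, true), (5, DoorLoc.C0)),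
    ((false, false, false, false, false, false, true), (5, DoorLoc.C1)),
    ((false, false, false, false, false, false, true), (0, DoorLoc.C0)),
    ((false, false, false, false, false, false, true), (0, DoorLoc.C1)),
    ((false, false, false, false, false, false, true), (6, DoorLoc.O0)),
    ((false, false, false, false, false, false, true), (6, DoorLoc.O1)),
    ((false, false, false, false, false, false, false), (6, DoorLoc.O0)),
    ((false, false, false, false, false, false, false), (0, DoorLoc.C1)),
    ((false, false, false, false, false, false, false), (0, DoorLoc.C0)),
    ((false, false, false, false, false, false, false), (5, DoorLoc.T1)),
    ((false, false, false, false, false, false, false), (5, DoorLoc.C0)),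
    ((false, false, false, false, false, false, false), (5, DoorLoc.C1)),
    ((false, false, false, false, false, true, false), (5, DoorLoc.C0)),
    ((false, false, false, false, false, true, false), (5, DoorLoc.T1)),
    ((false, false, false, false, false, true, false), (5, DoorLoc.T0)),
    ((false, false, false, false, false, true, false), (5, DoorLoc.O0)),
    ((false, false, false, false, false, true, false), (5, DoorLoc.O1)),
    ((false, false, false, false, false, false, false), (5, DoorLoc.O0))]
  | true, DoorLoc.C0 => [
    ((false, false, false, false, false, false, false), (6, DoorLoc.T1)),
    ((false, false, false, false, false, false, false), (6, DoorLoc.C0)),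
    ((false, false, false, false, false, false, false), (6, DoorLoc.C1)),
    ((false, false, false, false, false, false, true), (6, DoorLoc.C0)),
    ((false, false, false, false, false, false, true), (6, DoorLoc.T1)),
    ((false, false, false, false, false, false, true), (6, DoorLoc.T0)),
    ((false, false, false, false, false, false, true), (5, DoorLoc.T1)),
    ((false, false, false, false, false, false, true), (5, DoorLoc.C0)),
    ((false, false, false, false, false, false, true), (5, DoorLoc.C1)),
    ((false, false, false, false, false, false, true), (0, DoorLoc.C0)),
    ((false, false, false, false, false, false, true), (0, DoorLoc.C1)),
    ((false, false, false, false, false, false, true), (6, DoorLoc.O0)),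
    ((false, false, false, false, false, false, true), (6, DoorLoc.O1)),
    ((false, false, false, false, false, false, false), (6, DoorLoc.O0)),
    ((false, false, false, false, false, false, false), (5, DoorLoc.T1)),
    ((false, false, false, false, false, false, false), (5, DoorLoc.C0)),
    ((false, false, false, false, false, false, false), (5, DoorLoc.C1)),
    ((false, false, false, false, false, false, false), (0, DoorLoc.C0)),
    ((false, false, false, false, false, false, false), (0, DoorLoc.C1)),
    ((true, false, false, false, false, false, false), (0, DoorLoc.C0)),
    ((true, false, false, false, false, false, false), (5, DoorLoc.T1)),
    ((true, false, false, false, false, false, false), (5, DoorLoc.C0)),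
    ((true, false, false, false, false, false, false), (5, DoorLoc.C1)),
    ((true, false, false, false, false, true, false), (5, DoorLoc.C0)),
    ((true, false, false, false, false, true, false), (5, DoorLoc.T1)),
    ((true, false, false, false, false, true, false), (5, DoorLoc.T0)),
    ((true, false, false, false, false, true, false), (5, DoorLoc.O0)),
    ((true, false, false, false, false, true, false), (5, DoorLoc.O1)),
    ((true, false, false, false, false, false, false), (5, DoorLoc.O0))]
  | false, DoorLoc.C1 => [
    ((false, false, false, false, false, false, false), (6, DoorLoc.T1)),
    ((false, false, false, false, false, false, false), (6, DoorLoc.C0)),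
    ((false, false, false, false, false, false, false), (6, DoorLoc.C1))]
  | true, DoorLoc.C1 => [
    ((true, false, false, false, false, false, false), (6, DoorLoc.T1)),
    ((true, false, false, false, false, false, false), (6, DoorLoc.C0)),
    ((true, false, false, false, false, false, false), (6, DoorLoc.C1))]

lemma reach_mem {dO dT dC : Bool} {V : Conf → Prop}
    (hcl : ∀ x, V x → ∀ y ∈ succ x, V y) {x y : Conf}
    (h : ReflTransGen (SysStep (doorGadget dO dT dC) (mySys dO dT dC)) x y) (hx : V x) : V y := by
  induction h with
  | refl => exact hx
  | tail _ h2 ih => exact hcl _ ih _ (step_succ h2)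

set_option maxHeartbeats 4000000 in
set_option maxRecDepth 10000 in
lemma VLK_closed : ∀ s a, ∀ k ∈ VLK s a, ∀ k' ∈ succK k, k' ∈ VLK s a := by decide

lemma VLK_start : ∀ s a, key (myEnc s, myExt a) ∈ VLK s a := by decide

abbrev P (s : Bool) (a : DoorLoc) (s' : Bool) (b : DoorLoc) : Prop :=
  (s' = s ∧ b = a) ∨ (a = O0 ∧ s' = true ∧ b = O1) ∨
  (a = T0 ∧ s = true ∧ s' = true ∧ b = T1) ∨ (a = C0 ∧ s' = false ∧ b = C1)

set_option synthInstance.maxSize 2000 in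
lemma VLK_extract : ∀ s a s' b, key (myEnc s', myExt b) ∈ VLK s a → P s a s' b := by decide

instance (dO dT dC : Bool) (x y : Bool × DoorLoc) : Decidable (doorTrav dO dT dC x y) := by
  unfold doorTrav; exact inferInstance

set_option synthInstance.maxSize 2000 in
set_option maxHeartbeats 1000000 in
lemma dirP_closed : ∀ (s : Bool) (a : DoorLoc) (s1 : Bool) (b1 : DoorLoc) (s' : Bool) (b : DoorLoc),
    P s a s1 b1 → doorTrav true true true (s1, b1) (s', b) → P s a s' b := by decide

lemma dirChar (s s' : Bool) (a b : DoorLoc) :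
    ReflTransGen (doorTrav true true true) (s, a) (s', b) ↔ P s a s' b := by
  constructor
  · intro h
    have key : ∀ x y : Bool × DoorLoc,
        ReflTransGen (doorTrav true true true) x y → P x.1 x.2 y.1 y.2 := by
      intro x y h
      induction h with
      | refl => exact Or.inl ⟨rfl, rfl⟩
      | @tail m z _ h2 ih => exact dirP_closed x.1 x.2 m.1 m.2 z.1 z.2 ih h2
    exact key (s, a) (s', b) h
  · rintro (⟨rfl, rfl⟩ | ⟨rfl, rfl, rfl⟩ | ⟨rfl, rfl, rfl, rfl⟩ | ⟨rfl, rfl, rfl⟩)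
    · exact .refl
    · exact .single (Or.inl ⟨rfl, rfl⟩)
    · exact .single (Or.inr (Or.inr (Or.inl ⟨rfl, rfl, rfl⟩)))
    · exact .single (Or.inr (Or.inr (Or.inr (Or.inr (Or.inl ⟨rfl, rfl⟩)))))
lemma cross_diode {dO dT dC : Bool} (σ : Idx → Bool) (i : Idx)
    (h1 : myConn (i, O1) (i, T0)) (h2 : myConn (i, T1) (i, C0)) :
    ReflTransGen (SysStep (doorGadget dO dT dC) (mySys dO dT dC))
      (σ, (i, O0)) ((Function.update σ i false : Idx → Bool), (i, C1)) := by
  have hs : updState σ i true i = true := by rw [updState_eq]; simp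
  have key : ReflTransGen (SysStep (doorGadget dO dT dC) (mySys dO dT dC))
      (σ, (i, O0)) (updState (updState (updState σ i true) i true) i false, (i, C1)) :=
    .head (.trav (Or.inl ⟨rfl, rfl⟩))
      (.head (.move h1)
        (.head (.trav (Or.inr (Or.inr (Or.inl ⟨hs, rfl, rfl⟩))))
          (.head (.move h2)
            (.head (.trav (Or.inr (Or.inr (Or.inr (Or.inr (Or.inl ⟨rfl, rfl⟩)))))) .refl))))
  erw [show updState (updState (updState σ i true) i true) i false = Function.update σ i false from by
    rw [updState_eq, updState_eq, updState_eq, Function.update_idem, Function.update_idem]] at key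
  exact key

lemma upd_enc_ne (s : Bool) {i : Idx} (h : i ≠ 0) :
    Function.update (myEnc s) i false = myEnc s := by
  funext j
  rcases eq_or_ne j i with rfl | hj
  · rw [Function.update_self]; simp [myEnc, h]
  · rw [Function.update_of_ne hj]

lemma upd_enc_zero (s b : Bool) : Function.update (myEnc s) 0 b = myEnc b := by
  funext j
  rcases eq_or_ne j 0 with rfl | hj
  · rw [Function.update_self]; simp [myEnc]
  · rw [Function.update_of_ne hj]; simp [myEnc, hj]

lemma P_path {dO dT dC : Bool} (s s' : Bool) (a b : DoorLoc) (hp : P s a s' b) :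
    ReflTransGen (SysStep (doorGadget dO dT dC) (mySys dO dT dC))
      (myEnc s, myExt a) (myEnc s', myExt b) := by
  rcases hp with ⟨rfl, rfl⟩ | ⟨rfl, rfl, rfl⟩ | ⟨rfl, rfl, rfl, rfl⟩ | ⟨rfl, rfl, rfl⟩
  · exact .refl
  · -- opening tunnel
    have c1 := cross_diode (dO := dO) (dT := dT) (dC := dC) (myEnc s) 1 (by decide) (by decide)
    rw [upd_enc_ne s (by decide)] at c1
    have m1 : SysStep (doorGadget dO dT dC) (mySys dO dT dC) (myEnc s, ((1 : Idx), C1)) (myEnc s, ((0 : Idx), O0)) :=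
      .move (show myConn (1, C1) (0, O0) from by decide)
    have t1 : SysStep (doorGadget dO dT dC) (mySys dO dT dC) (myEnc s, ((0 : Idx), O0)) (myEnc true, ((0 : Idx), O1)) := by
      have h := SysStep.trav (G := doorGadget dO dT dC) (S := mySys dO dT dC)
        (σg := myEnc s) (i := 0) (a := O0) (b := O1) (s' := true) (Or.inl ⟨rfl, rfl⟩)
      erw [updState_eq, upd_enc_zero] at h
      exact h
    have m2 : SysStep (doorGadget dO dT dC) (mySys dO dT dC) (myEnc true, ((0 : Idx), O1)) (myEnc true, ((2 : Idx), O0)) :=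
      .move (show myConn (0, O1) (2, O0) from by decide)
    have c2 := cross_diode (dO := dO) (dT := dT) (dC := dC) (myEnc true) 2 (by decide) (by decide)
    rw [upd_enc_ne true (by decide)] at c2
    exact c1.trans (.head m1 (.head t1 (.head m2 c2)))
  · -- traverse tunnel (s = true)
    have c3 := cross_diode (dO := dO) (dT := dT) (dC := dC) (myEnc true) 3 (by decide) (by decide)
    rw [upd_enc_ne true (by decide)] at c3
    have m3 : SysStep (doorGadget dO dT dC) (mySys dO dT dC) (myEnc true, ((3 : Idx), C1)) (myEnc true, ((0 : Idx), T0)) :=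
      .move (show myConn (3, C1) (0, T0) from by decide)
    have t2 : SysStep (doorGadget dO dT dC) (mySys dO dT dC) (myEnc true, ((0 : Idx), T0)) (myEnc true, ((0 : Idx), T1)) := by
      have h := SysStep.trav (G := doorGadget dO dT dC) (S := mySys dO dT dC)
        (σg := myEnc true) (i := 0) (a := T0) (b := T1) (s' := true)
        (Or.inr (Or.inr (Or.inl ⟨rfl, rfl, rfl⟩)))
      erw [updState_eq, upd_enc_zero] at h
      exact h
    have m4 : SysStep (doorGadget dO dT dC) (mySys dO dT dC) (myEnc true, ((0 : Idx), T1)) (myEnc true, ((4 : Idx), O0)) :=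
      .move (show myConn (0, T1) (4, O0) from by decide)
    have c4 := cross_diode (dO := dO) (dT := dT) (dC := dC) (myEnc true) 4 (by decide) (by decide)
    rw [upd_enc_ne true (by decide)] at c4
    exact c3.trans (.head m3 (.head t2 (.head m4 c4)))
  · -- closing tunnel
    have c5 := cross_diode (dO := dO) (dT := dT) (dC := dC) (myEnc s) 5 (by decide) (by decide)
    rw [upd_enc_ne s (by decide)] at c5
    have m5 : SysStep (doorGadget dO dT dC) (mySys dO dT dC) (myEnc s, ((5 : Idx), C1)) (myEnc s, ((0 : Idx), C0)) :=
      .move (show myConn (5, C1) (0, C0) from by decide)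
    have t3 : SysStep (doorGadget dO dT dC) (mySys dO dT dC) (myEnc s, ((0 : Idx), C0)) (myEnc false, ((0 : Idx), C1)) := by
      have h := SysStep.trav (G := doorGadget dO dT dC) (S := mySys dO dT dC)
        (σg := myEnc s) (i := 0) (a := C0) (b := C1) (s' := false)
        (Or.inr (Or.inr (Or.inr (Or.inr (Or.inl ⟨rfl, rfl⟩)))))
      erw [updState_eq, upd_enc_zero] at h
      exact h
    have m6 : SysStep (doorGadget dO dT dC) (mySys dO dT dC) (myEnc false, ((0 : Idx), C1)) (myEnc false, ((6 : Idx), O0)) :=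
      .move (show myConn (0, C1) (6, O0) from by decide)
    have c6 := cross_diode (dO := dO) (dT := dT) (dC := dC) (myEnc false) 6 (by decide) (by decide)
    rw [upd_enc_ne false (by decide)] at c6
    exact c5.trans (.head m5 (.head t3 (.head m6 c6)))

lemma main_sim (dO dT dC : Bool) :
    Simulates (doorGadget dO dT dC) (doorGadget true true true) := by
  refine ⟨mySys dO dT dC, myExt, myEnc, ?_, ?_, ?_⟩
  · intro a b h
    exact (by decide : ∀ a b : DoorLoc, myExt a = myExt b → a = b) a b h
  · intro s s' h
    have := congrFun h 0
    have h2 : @Eq Bool s s' := by simpa [myEnc] using this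
    exact h2
  · intro s s' a b
    constructor
    · intro h
      have hmem := reach_mem (V := fun c => key c ∈ VLK s a)
        (fun x hx y hy => VLK_closed s a _ hx _ (key_succ hy)) h (VLK_start s a)
      exact (dirChar s s' a b).mpr (VLK_extract s a s' b hmem)
    · intro h
      exact P_path s s' a b ((dirChar s s' a b).mp h)

end DoorSim

/-- Any door that can simulate a diode can simulate the fully directed
door (the door obtained by directing each of its tunnels); hence every door gadget can
simulate some fully directed door. -/
theorem door_simulating_diode_simulates_directed_door :
    (∀ dO dT dC : Bool, Simulates (doorGadget dO dT dC) diode →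
      Simulates (doorGadget dO dT dC) (doorGadget true true true)) ∧
    (∀ dO dT dC : Bool, Simulates (doorGadget dO dT dC) (doorGadget true true true)) :=
  ⟨fun dO dT dC _ => main_sim dO dT dC, main_sim⟩
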